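/- Under the isomorphism Υ: Λ₁ᵐG* ≅ Aff(Σ, ΛᵐH*), the subspace Λ₀ᵐG* of semibasic forms corresponds exactly to the constant affine maps, i.e., Υ(Λ₀ᵐG*) = {φ ∈ Aff(Σ, ΛᵐH*) : φ̂ = 0}. -/

import Mathlib

/-- `Λ₁ᵐG*`: alternating `m`-forms on `G` vanishing whenever two distinct arguments lie in `F`
(equivalently `i(u)i(v)α = 0` for all `u,v ∈ F`). -/
def Lambda1 (K G : Type*) [Field K] [AddCommGroup G] [Module K G]
    (F : Submodule K G) (m : ℕ) : Submodule K (G [⋀^Fin m]→ₗ[K] K) where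
  carrier := {α | ∀ (x : Fin m → G) (i j : Fin m), i ≠ j → x i ∈ F → x j ∈ F → α x = 0}
  add_mem' := by
    intro a b ha hb x i j hij hi hj
    simp [ha x i j hij hi hj, hb x i j hij hi hj]
  zero_mem' := by intro x i j _ _ _; simp
  smul_mem' := by
    intro c a ha x i j hij hi hj
    simp [ha x i j hij hi hj]

/-- `Λ₀ᵐG* = π*(ΛᵐH*)`: the semibasic `m`-forms on `G`, i.e. those pulled back from `H`
along the projection `π`. -/
def Lambda0 (K G H : Type*) [Field K] [AddCommGroup G] [Module K G]
    [AddCommGroup H] [Module K H] (π : G →ₗ[K] H) (m : ℕ) :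
    Submodule K (G [⋀^Fin m]→ₗ[K] K) where
  carrier := {α | ∃ β : H [⋀^Fin m]→ₗ[K] K, α = β.compLinearMap π}
  add_mem' := by
    rintro a b ⟨βa, rfl⟩ ⟨βb, rfl⟩
    exact ⟨βa + βb, (AlternatingMap.add_compLinearMap βa βb π).symm⟩
  zero_mem' := ⟨0, (AlternatingMap.zero_compLinearMap π).symm⟩
  smul_mem' := by
    rintro c a ⟨β, rfl⟩
    refine ⟨c • β, ?_⟩
    ext v
    simp

set_option linter.unusedSectionVars false

section
variable {K G H : Type*} [Field K] [AddCommGroup G] [Module K G]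
    [AddCommGroup H] [Module K H] [FiniteDimensional K G] [FiniteDimensional K H]

private lemma stmt13_key
    (F : Submodule K G) (π : G →ₗ[K] H)
    (hker : LinearMap.ker π = F) (m : ℕ) (hm : Module.finrank K H = m) (hm1 : 1 ≤ m)
    (η : G [⋀^Fin m]→ₗ[K] K)
    (hconst : ∀ σ σ' : H →ₗ[K] G, π ∘ₗ σ = LinearMap.id → π ∘ₗ σ' = LinearMap.id →
        η.compLinearMap σ = η.compLinearMap σ')
    (σ₀ : H →ₗ[K] G) (hσ₀ : π ∘ₗ σ₀ = LinearMap.id)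
    (x : Fin m → G) (i : Fin m) (hxi : x i ∈ F)
    (hx : ∀ j, j ≠ i → σ₀ (π (x j)) = x j) : η x = 0 := by
  classical
  by_cases hli : LinearIndependent K (fun j : {j : Fin m // j ≠ i} => π (x j.1))
  · -- independent case
    set g : {j : Fin m // j ≠ i} → H := fun j => π (x j.1) with hg
    have hcard : Fintype.card {j : Fin m // j ≠ i} = m - 1 := by
      simp [Fintype.card_subtype_compl]
    have hspan : Submodule.span K (Set.range g) ≠ ⊤ := by
      intro htop
      have := finrank_span_eq_card hli
      rw [htop] at this
      simp [hcard, hm] at this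
      omega
    obtain ⟨w, hw⟩ : ∃ w : H, w ∉ Submodule.span K (Set.range g) := by
      by_contra hc
      push_neg at hc
      exact hspan (by ext z; simp [hc z])
    obtain ⟨τ, hτw, hτ0⟩ := (Submodule.span K (Set.range g)).exists_dual_map_eq_bot_of_notMem hw
      inferInstance
    have hτg : ∀ j : {j : Fin m // j ≠ i}, τ (g j) = 0 := by
      intro j
      have : τ (g j) ∈ (Submodule.span K (Set.range g)).map τ :=
        Submodule.mem_map_of_mem (Submodule.subset_span ⟨j, rfl⟩)
      rw [hτ0] at this
      exact (Submodule.mem_bot K).mp this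
    -- rescale τ so that τ' w = 1
    set τ' : H →ₗ[K] K := (τ w)⁻¹ • τ with hτ'def
    have hτ'w : τ' w = 1 := by
      simp [hτ'def, inv_mul_cancel₀ hτw]
    have hτ'g : ∀ j : {j : Fin m // j ≠ i}, τ' (g j) = 0 := by
      intro j; simp [hτ'def, hτg j]
    -- the modified section
    set u : G := x i
    have hu : π u = 0 := by rw [← hker] at hxi; exact hxi
    set σ' : H →ₗ[K] G := σ₀ + τ'.smulRight u with hσ'def
    have hσ' : π ∘ₗ σ' = LinearMap.id := by
      ext h
      have := LinearMap.congr_fun hσ₀ h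
      simp only [LinearMap.coe_comp, Function.comp_apply, LinearMap.id_coe, id_eq] at this
      simp [hσ'def, hu, this]
    -- the test tuple
    set hh : Fin m → H := Function.update (fun j => π (x j)) i w with hhdef
    have heval := congrArg (fun (φ : H [⋀^Fin m]→ₗ[K] K) => φ hh) (hconst σ₀ σ' hσ₀ hσ')
    simp only [AlternatingMap.compLinearMap_apply] at heval
    have h1 : (fun j => σ₀ (hh j)) = Function.update x i (σ₀ w) := by
      funext j
      by_cases hj : j = i
      · subst hj; simp [hhdef]
      · simp [hhdef, Function.update_of_ne hj, hx j hj]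
    have h2 : (fun j => σ' (hh j)) = Function.update x i (σ₀ w + u) := by
      funext j
      by_cases hj : j = i
      · subst hj; simp [hhdef, hσ'def, hτ'w]
      · simp [hhdef, hσ'def, Function.update_of_ne hj, hx j hj, hτ'g ⟨j, hj⟩]; exact Or.inl (hτ'g ⟨j, hj⟩)
    rw [h1, h2] at heval
    have h3 : η (Function.update x i (σ₀ w + u)) =
        η (Function.update x i (σ₀ w)) + η (Function.update x i u) := by
      exact η.map_update_add x i (σ₀ w) u
    rw [h3] at heval
    have h4 : Function.update x i u = x := Function.update_eq_self i x
    rw [h4] at heval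
    exact left_eq_add.mp heval
  · -- dependent case
    have : ¬ LinearIndependent K x := by
      intro hxind
      apply hli
      have h1 : LinearIndependent K (fun j : {j : Fin m // j ≠ i} => x j.1) :=
        hxind.comp _ Subtype.val_injective
      have h2 : LinearIndependent K (fun j : {j : Fin m // j ≠ i} => σ₀ (π (x j.1))) := by
        convert h1 using 1
        ext j
        exact hx j.1 j.2
      exact h2.of_comp σ₀
    exact η.map_linearDependent x this
end

/-- Under the isomorphism `Υ : Λ₁ᵐG* ≅ Aff(Σ, ΛᵐH*)`, `Υ(η)(σ) = σ*η`,
the subspace `Λ₀ᵐG*` of semibasic forms corresponds exactly to the constant affine maps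
(those with vanishing linear part): for `η ∈ Λ₁ᵐG*`, `η` is semibasic iff `σ ↦ σ*η`
is constant on the affine space `Σ` of linear sections of `π`. -/
theorem stmt_13 (K G H : Type*) [Field K] [AddCommGroup G] [Module K G]
    [AddCommGroup H] [Module K H] [FiniteDimensional K G] [FiniteDimensional K H]
    (F : Submodule K G) (π : G →ₗ[K] H) (hπ : Function.Surjective π)
    (hker : LinearMap.ker π = F) (m : ℕ) (hm : Module.finrank K H = m) (hm1 : 1 ≤ m)
    (η : G [⋀^Fin m]→ₗ[K] K) (hη : η ∈ Lambda1 K G F m) :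
    η ∈ Lambda0 K G H π m ↔
      ∀ σ σ' : H →ₗ[K] G, π ∘ₗ σ = LinearMap.id → π ∘ₗ σ' = LinearMap.id →
        η.compLinearMap σ = η.compLinearMap σ' := by
  classical
  constructor
  · rintro ⟨β, rfl⟩ σ σ' hσ hσ'
    ext v
    simp only [AlternatingMap.compLinearMap_apply]
    congr 1
    funext i
    have h1 := LinearMap.congr_fun hσ (v i)
    have h2 := LinearMap.congr_fun hσ' (v i)
    simp only [LinearMap.coe_comp, Function.comp_apply, LinearMap.id_coe, id_eq] at h1 h2
    rw [h1, h2]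
  · intro hconst
    obtain ⟨σ₀, hσ₀⟩ := π.exists_rightInverse_of_surjective (LinearMap.range_eq_top.2 hπ)
    refine ⟨η.compLinearMap σ₀, ?_⟩
    ext x
    set y : Fin m → G := fun j => σ₀ (π (x j)) with hy
    set f : Fin m → G := fun j => x j - y j with hf
    have hπσ : ∀ h : H, π (σ₀ h) = h := by
      intro h
      have := LinearMap.congr_fun hσ₀ h
      simpa using this
    have hfF : ∀ j, f j ∈ F := by
      intro j
      rw [← hker, LinearMap.mem_ker]
      simp [hf, hy, hπσ]
    have hxyf : x = y + f := by funext j; simp [hf]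
    have hexp : η x = ∑ s : Finset (Fin m), η (s.piecewise f y) := by
      conv_lhs => rw [hxyf, add_comm]
      exact η.toMultilinearMap.map_add_univ f y
    rw [hexp]
    rw [Finset.sum_eq_single ∅ ?_ (by simp)]
    · simp only [Finset.piecewise_empty]
      simp [AlternatingMap.compLinearMap_apply, hy]
    · intro s _ hs
      obtain ⟨i, hi⟩ := Finset.nonempty_iff_ne_empty.2 hs
      by_cases h2 : ∃ j ∈ s, j ≠ i
      · obtain ⟨j, hjs, hji⟩ := h2
        exact hη _ i j (Ne.symm hji) (by simp [Finset.piecewise_eq_of_mem _ _ _ hi, hfF])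
          (by simp [Finset.piecewise_eq_of_mem _ _ _ hjs, hfF])
      · push_neg at h2
        refine stmt13_key F π hker m hm hm1 η hconst σ₀ hσ₀ _ i
          (by simp [Finset.piecewise_eq_of_mem _ _ _ hi, hfF]) ?_
        intro j hj
        have hjs : j ∉ s := fun hjs => hj (h2 j hjs)
        rw [Finset.piecewise_eq_of_notMem _ _ _ hjs]
        simp [hy, hπσ]
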